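/- Let n ≥ 1 and d > 0. Let D be a real n×n diagonal matrix with every diagonal entry ≥ d, let A and B be real n×n matrices with ‖A‖_{∞,op} ≤ C and ‖B‖_{∞,op} ≤ C for some C > 0, and let x, y ∈ ℝⁿ with ‖x‖_∞ ≤ C' and ‖y‖_∞ ≤ C' for some C' > 0. Suppose 0 < τ ≤ d/(2C) and (D + τA)x = (D + τB)y. Then ‖x − y‖_∞ ≤ (2τC'/d) · ‖A − B‖_{∞,op}. -/
import Mathlib


open Matrix BigOperators

/-- The maximum norm `‖v‖_∞ = max_k |v_k|` of a vector in `ℝⁿ`. -/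
def vecInfNorm {n : ℕ} [NeZero n] (v : Fin n → ℝ) : ℝ :=
  Finset.univ.sup' Finset.univ_nonempty fun k => |v k|

/-- The operator norm induced by `‖·‖_∞`, i.e. the maximum absolute row sum
`‖M‖_{∞,op} = max_i ∑_j |M_{ij}|`. -/
def matInfNorm {n : ℕ} [NeZero n] (M : Matrix (Fin n) (Fin n) ℝ) : ℝ :=
  Finset.univ.sup' Finset.univ_nonempty fun i => ∑ j, |M i j|

lemma abs_le_vecInfNorm {n : ℕ} [NeZero n] (v : Fin n → ℝ) (k : Fin n) :
    |v k| ≤ vecInfNorm v :=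
  Finset.le_sup' (fun k => |v k|) (Finset.mem_univ k)

lemma vecInfNorm_nonneg {n : ℕ} [NeZero n] (v : Fin n → ℝ) : 0 ≤ vecInfNorm v :=
  le_trans (abs_nonneg _) (abs_le_vecInfNorm v (Classical.arbitrary _))

lemma rowSum_le_matInfNorm {n : ℕ} [NeZero n] (M : Matrix (Fin n) (Fin n) ℝ) (i : Fin n) :
    ∑ j, |M i j| ≤ matInfNorm M :=
  Finset.le_sup' (fun i => ∑ j, |M i j|) (Finset.mem_univ i)

lemma mulVec_entry_bound {n : ℕ} [NeZero n] (M : Matrix (Fin n) (Fin n) ℝ)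
    (v : Fin n → ℝ) (i : Fin n) :
    |(M *ᵥ v) i| ≤ matInfNorm M * vecInfNorm v := by
  calc |(M *ᵥ v) i| = |∑ j, M i j * v j| := rfl
    _ ≤ ∑ j, |M i j * v j| := Finset.abs_sum_le_sum_abs _ _
    _ = ∑ j, |M i j| * |v j| := by simp [abs_mul]
    _ ≤ ∑ j, |M i j| * vecInfNorm v := by
        refine Finset.sum_le_sum fun j _ => ?_
        exact mul_le_mul_of_nonneg_left (abs_le_vecInfNorm v j) (abs_nonneg _)
    _ = (∑ j, |M i j|) * vecInfNorm v := by rw [Finset.sum_mul]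
    _ ≤ matInfNorm M * vecInfNorm v :=
        mul_le_mul_of_nonneg_right (rowSum_le_matInfNorm M i) (vecInfNorm_nonneg v)

/-- perturbation inequality
`‖x − y‖_∞ ≤ (2τC'/d) ‖A − B‖_{∞,op}` when `(D + τA)x = (D + τB)y`. -/
theorem perturbation_inequality
    (n : ℕ) [NeZero n] (d : ℝ) (hd : 0 < d)
    (dv : Fin n → ℝ) (hdv : ∀ k, d ≤ dv k)
    (C C' : ℝ) (hC : 0 < C) (hC' : 0 < C')
    (A B : Matrix (Fin n) (Fin n) ℝ)
    (hA : matInfNorm A ≤ C) (hB : matInfNorm B ≤ C)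
    (x y : Fin n → ℝ) (hx : vecInfNorm x ≤ C') (hy : vecInfNorm y ≤ C')
    (τ : ℝ) (hτ : 0 < τ) (hτ2 : τ ≤ d / (2 * C))
    (heq : (Matrix.diagonal dv + τ • A) *ᵥ x = (Matrix.diagonal dv + τ • B) *ᵥ y) :
    vecInfNorm (x - y) ≤ (2 * τ * C' / d) * matInfNorm (A - B) := by
  set e : Fin n → ℝ := x - y with he
  -- pick index achieving the max
  obtain ⟨k, -, hk⟩ := Finset.exists_mem_eq_sup' (Finset.univ_nonempty (α := Fin n))
    (fun k => |e k|)
  have hnorm : vecInfNorm e = |e k| := hk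
  -- key componentwise identity
  have hcomp : dv k * e k + τ * (A *ᵥ e) k = τ * ((B - A) *ᵥ y) k := by
    have h1 := congrFun heq k
    simp only [Matrix.add_mulVec, Matrix.mulVec_diagonal, Matrix.smul_mulVec,
      Pi.add_apply, Pi.smul_apply, smul_eq_mul] at h1
    have h2 : (A *ᵥ e) k = (A *ᵥ x) k - (A *ᵥ y) k := by
      rw [he, Matrix.mulVec_sub]; rfl
    have h3 : ((B - A) *ᵥ y) k = (B *ᵥ y) k - (A *ᵥ y) k := by
      rw [Matrix.sub_mulVec]; rfl
    have h4 : e k = x k - y k := rfl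
    rw [h2, h3, h4]
    ring_nf
    ring_nf at h1
    linarith
  have habs : dv k * |e k| ≤ τ * C * |e k| + τ * (matInfNorm (A - B) * C') := by
    have h5 : dv k * e k = τ * ((B - A) *ᵥ y) k - τ * (A *ᵥ e) k := by linarith
    have h6 : |dv k * e k| ≤ τ * |((B - A) *ᵥ y) k| + τ * |(A *ᵥ e) k| := by
      rw [h5]
      calc |τ * ((B - A) *ᵥ y) k - τ * (A *ᵥ e) k|
          ≤ |τ * ((B - A) *ᵥ y) k| + |τ * (A *ᵥ e) k| := abs_sub _ _
        _ = τ * |((B - A) *ᵥ y) k| + τ * |(A *ᵥ e) k| := by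
            rw [abs_mul, abs_mul, abs_of_pos hτ]
    have hBA : matInfNorm (B - A) = matInfNorm (A - B) := by
      unfold matInfNorm
      congr 1
      funext i
      refine Finset.sum_congr rfl fun j _ => ?_
      simp [Matrix.sub_apply, abs_sub_comm]
    have h7 : |((B - A) *ᵥ y) k| ≤ matInfNorm (A - B) * C' := by
      calc |((B - A) *ᵥ y) k| ≤ matInfNorm (B - A) * vecInfNorm y :=
            mulVec_entry_bound _ _ _
        _ ≤ matInfNorm (A - B) * C' := by
            rw [hBA]
            refine mul_le_mul_of_nonneg_left hy ?_
            exact le_trans (Finset.sum_nonneg fun j _ => abs_nonneg _)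
              (rowSum_le_matInfNorm _ k)
    have h8 : |(A *ᵥ e) k| ≤ C * |e k| := by
      calc |(A *ᵥ e) k| ≤ matInfNorm A * vecInfNorm e := mulVec_entry_bound _ _ _
        _ = matInfNorm A * |e k| := by rw [hnorm]
        _ ≤ C * |e k| := mul_le_mul_of_nonneg_right hA (abs_nonneg _)
    have h9 : |dv k * e k| = dv k * |e k| := by
      rw [abs_mul, abs_of_pos (lt_of_lt_of_le hd (hdv k))]
    nlinarith [hτ.le]
  -- now d/2 * |e k| ≤ τ * C' * matInfNorm (A - B)
  have hτC : τ * C ≤ d / 2 := by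
    rw [le_div_iff₀ (by positivity)] at hτ2
    nlinarith
  have hfinal : (d / 2) * |e k| ≤ τ * (matInfNorm (A - B) * C') := by
    have := hdv k
    nlinarith [abs_nonneg (e k)]
  rw [hnorm]
  rw [div_mul_eq_mul_div, le_div_iff₀ hd]
  nlinarith [abs_nonneg (e k)]
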